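/- Let g = h ⊕ p be an orthogonal symmetric decomposition of a compact-type Lie algebra as above, and define P : h → h by B_g(P·,·)|_{h×h} = B_h(·,·). Then P is symmetric with respect to the inner product −B_g|_h, and satisfies 0 ≤ P ≤ I, so every eigenvalue of the operator (1/2)(I − P) lies in [0, 1/2]. -/

import Mathlib

open LinearMap (trace)
open scoped RealInnerProductSpace

lemma skew_trace_sq_nonpos {E : Type*} [NormedAddCommGroup E] [InnerProductSpace ℝ E]
    [FiniteDimensional ℝ E] (A : E →ₗ[ℝ] E)
    (h : ∀ x y : E, ⟪A x, y⟫ = -⟪x, A y⟫) :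
    LinearMap.trace ℝ E (A ∘ₗ A) ≤ 0 := by
  let b := stdOrthonormalBasis ℝ E
  rw [LinearMap.trace_eq_matrix_trace ℝ b.toBasis, Matrix.trace]
  apply Finset.sum_nonpos
  intro i _
  have key : (LinearMap.toMatrix b.toBasis b.toBasis (A ∘ₗ A)) i i
      = ⟪b i, A (A (b i))⟫ := by
    rw [LinearMap.toMatrix_apply, OrthonormalBasis.coe_toBasis,
      OrthonormalBasis.coe_toBasis_repr_apply, b.repr_apply_apply]
    simp
  have : ⟪b i, A (A (b i))⟫ = -⟪A (b i), A (b i)⟫ := by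
    rw [real_inner_comm, h]
  simp only [Matrix.diag_apply, key, this]
  simpa using real_inner_self_nonneg (x := A (b i))

/-- Let `g = h ⊕ p` be an orthogonal symmetric decomposition of a compact-type real Lie
algebra (negative definite Killing form `B_g`), and let `P : h → h` be defined by
`B_g(P·,·)|_{h×h} = B_h(·,·)`. Then `P` is symmetric with respect to the inner product
`−B_g|_h`, satisfies `0 ≤ P ≤ I`, and every eigenvalue of `(1/2)(I − P)` (the curvature
operator of the symmetric space `G/H`) lies in `[0, 1/2]`. -/
theorem stmt_12 (L : Type*) [LieRing L] [LieAlgebra ℝ L] [Module.Finite ℝ L]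
    (hneg : ∀ x : L, x ≠ 0 → killingForm ℝ L x x < 0)
    (H : LieSubalgebra ℝ L) (p : Submodule ℝ L)
    (hperp : ∀ x : L, x ∈ p ↔ ∀ y ∈ H, killingForm ℝ L x y = 0)
    (hhp : ∀ x ∈ H, ∀ y ∈ p, ⁅x, y⁆ ∈ p)
    (hpp : ∀ x ∈ p, ∀ y ∈ p, ⁅x, y⁆ ∈ H)
    (P : H →ₗ[ℝ] H)
    (hP : ∀ X Y : H, killingForm ℝ L (P X : L) (Y : L) = killingForm ℝ H X Y) :
    (∀ X Y : H, killingForm ℝ L (P X : L) (Y : L) = killingForm ℝ L (X : L) (P Y : L)) ∧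
    (∀ X : H, 0 ≤ -killingForm ℝ L (P X : L) (X : L)) ∧
    (∀ X : H, -killingForm ℝ L (P X : L) (X : L) ≤ -killingForm ℝ L (X : L) (X : L)) ∧
    (∀ (μ : ℝ) (v : H), v ≠ 0 →
      ((1 / 2 : ℝ) • ((LinearMap.id : H →ₗ[ℝ] H) - P)) v = μ • v → 0 ≤ μ ∧ μ ≤ 1 / 2) := by
  have bsymm : ∀ x y : L, killingForm ℝ L x y = killingForm ℝ L y x :=
    fun x y => LieModule.traceForm_comm ℝ L L x y
  have part1 : ∀ X Y : H,
      killingForm ℝ L (P X : L) (Y : L) = killingForm ℝ L (X : L) (P Y : L) := by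
    intro X Y
    rw [hP, LieModule.traceForm_comm ℝ H H X Y, ← hP Y X, bsymm]
  have hskew : ∀ z x y : L, killingForm ℝ L ⁅z, x⁆ y = - killingForm ℝ L x ⁅z, y⁆ :=
    fun z x y => LieModule.traceForm_apply_lie_apply' ℝ L L z x y
  letI core : InnerProductSpace.Core ℝ L :=
  { inner := fun x y => - killingForm ℝ L x y
    conj_inner_symm := fun x y => by simpa using congrArg Neg.neg (bsymm y x)
    re_inner_nonneg := fun x => by
      rcases eq_or_ne x 0 with rfl | hx
      · simp
      · simpa using (neg_nonneg.2 (hneg x hx).le)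
    add_left := fun x y z => by simp; ring
    smul_left := fun x y r => by simp
    definite := fun x hx => by
      by_contra h
      have h2 := hneg x h
      have : (- killingForm ℝ L x x : ℝ) = 0 := hx
      linarith }
  letI : NormedAddCommGroup L := core.toNormedAddCommGroup
  letI : InnerProductSpace ℝ L := InnerProductSpace.ofCore core.toCore
  haveI : FiniteDimensional ℝ L := ‹Module.Finite ℝ L›
  have hinner : ∀ x y : L, ⟪x, y⟫ = - killingForm ℝ L x y := fun _ _ => rfl
  -- p is the orthogonal complement of H
  have hpo : p = (H.toSubmodule)ᗮ := by
    ext x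
    rw [Submodule.mem_orthogonal, hperp x]
    constructor
    · intro h u hu
      rw [hinner, bsymm, h u hu, neg_zero]
    · intro h y hy
      have := h y hy
      rw [hinner, bsymm] at this
      linarith
  have hcompl : IsCompl H.toSubmodule p := by
    rw [hpo]
    exact Submodule.isCompl_orthogonal_of_hasOrthogonalProjection
  set N : Bool → Submodule ℝ L := fun b => bif b then H.toSubmodule else p with hN
  have hint : DirectSum.IsInternal N := by
    rw [DirectSum.isInternal_submodule_iff_isCompl N (i := true) (j := false) (by simp)
      (by ext b; cases b <;> simp)]
    exact hcompl
  have key : ∀ X : H, killingForm ℝ H X X ≤ 0 ∧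
      killingForm ℝ L (X:L) (X:L) ≤ killingForm ℝ H X X := by
    intro X
    set A := LieAlgebra.ad ℝ L (X:L) with hA
    have mH : Set.MapsTo A H.toSubmodule H.toSubmodule := fun y hy => by
      simpa [hA, LieAlgebra.ad_apply] using H.lie_mem X.2 hy
    have mp : Set.MapsTo A p p := fun y hy => by
      simpa [hA, LieAlgebra.ad_apply] using hhp _ X.2 y hy
    have skewgen : ∀ (S : Submodule ℝ L) (mS : Set.MapsTo A S S),
        LinearMap.trace ℝ S ((A.restrict mS) ∘ₗ (A.restrict mS)) ≤ 0 := by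
      intro S mS
      apply skew_trace_sq_nonpos
      intro u v
      rw [Submodule.coe_inner, Submodule.coe_inner]
      show ⟪A (u:L), (v:L)⟫ = - ⟪(u:L), A (v:L)⟫
      rw [hinner, hinner, hA, LieAlgebra.ad_apply, LieAlgebra.ad_apply, hskew]
    have tH := skewgen H.toSubmodule mH
    have tp := skewgen p mp
    have hadH : LieAlgebra.ad ℝ H X = A.restrict mH := by
      ext y
      exact rfl
    have hBH : killingForm ℝ H X X
        = LinearMap.trace ℝ H.toSubmodule ((A.restrict mH) ∘ₗ (A.restrict mH)) := by
      rw [killingForm_apply_apply, hadH]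
      exact rfl
    have hf : ∀ i, Set.MapsTo (A ∘ₗ A) (N i) (N i) := by
      intro i; cases i
      · exact fun y hy => mp (mp hy)
      · exact fun y hy => mH (mH hy)
    have hsplit : killingForm ℝ L (X:L) (X:L)
        = LinearMap.trace ℝ H.toSubmodule ((A ∘ₗ A).restrict (hf true))
          + LinearMap.trace ℝ p ((A ∘ₗ A).restrict (hf false)) := by
      rw [killingForm_apply_apply, ← hA,
        LinearMap.trace_eq_sum_trace_restrict hint hf, Fintype.sum_bool]
      rfl
    have hresH : (A ∘ₗ A).restrict (hf true) = (A.restrict mH) ∘ₗ (A.restrict mH) :=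
      LinearMap.ext fun x => rfl
    have hresp : (A ∘ₗ A).restrict (hf false) = (A.restrict mp) ∘ₗ (A.restrict mp) :=
      LinearMap.ext fun x => rfl
    constructor
    · rw [hBH]; exact tH
    · rw [hsplit, hresH, hresp, ← hBH]
      linarith
  have part2 : ∀ X : H, 0 ≤ -killingForm ℝ L (P X : L) (X : L) := by
    intro X
    rw [hP]
    linarith [(key X).1]
  have part3 : ∀ X : H,
      -killingForm ℝ L (P X : L) (X : L) ≤ -killingForm ℝ L (X : L) (X : L) := by
    intro X
    rw [hP]
    linarith [(key X).2]
  refine ⟨part1, part2, part3, ?_⟩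
  intro μ v hv hev
  have h0 : (1/2 : ℝ) • (v - P v) = μ • v := by
    simpa using hev
  have h2 : v - P v = (2*μ) • v := by
    calc v - P v = (2:ℝ) • ((1/2:ℝ) • (v - P v)) := by rw [smul_smul]; norm_num
    _ = (2:ℝ) • (μ • v) := by rw [h0]
    _ = (2*μ) • v := by rw [smul_smul]
  have h1 : P v = (1 - 2*μ) • v := by
    rw [sub_smul, one_smul, ← h2, sub_sub_cancel]
  have hvne : (v : L) ≠ 0 := fun h => hv (Subtype.ext h)
  have hc : 0 < -killingForm ℝ L (v:L) (v:L) := by linarith [hneg _ hvne]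
  have hcoe : ((P v : H) : L) = (1 - 2*μ) • (v : L) := by
    rw [h1]; rfl
  have heq : -killingForm ℝ L (P v : L) (v:L)
      = (1 - 2*μ) * (-killingForm ℝ L (v:L) (v:L)) := by
    rw [hcoe, map_smul]
    simp only [LinearMap.smul_apply, smul_eq_mul]
    ring
  have e2 := part2 v
  have e3 := part3 v
  rw [heq] at e2 e3
  obtain ⟨c, hc', e2', e3'⟩ : ∃ c : ℝ, 0 < c ∧ 0 ≤ (1 - 2*μ) * c ∧ (1 - 2*μ) * c ≤ c :=
    ⟨_, hc, e2, e3⟩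
  clear * - hc' e2' e3'
  constructor
  · nlinarith
  · nlinarith
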